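/- Let Z_1, ..., Z_{n+1} be exchangeable real-valued random variables with no ties almost surely. Let Q_{1-α} be the ⌈(1-α)(n+1)⌉-th smallest value among Z_1, ..., Z_n (assume ⌈(1-α)(n+1)⌉ ≤ n). Then P(Z_{n+1} ≤ Q_{1-α}) ≤ 1 - α + 1/(n+1). -/

import Mathlib

open MeasureTheory
open scoped ENNReal

/-- The `k`-th smallest value (1-indexed) of a finite tuple of reals, `0` by default. -/
noncomputable def orderStat {n : ℕ} (v : Fin n → ℝ) (k : ℕ) : ℝ :=
  ((Finset.univ.val.map v).sort (· ≤ ·)).getD (k - 1) 0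

noncomputable def rankv {m : ℕ} (v : Fin m → ℝ) (i : Fin m) : ℕ :=
  (Finset.univ.filter (fun j => v j ≤ v i)).card

lemma rankv_perm {m : ℕ} (v : Fin m → ℝ) (π : Equiv.Perm (Fin m)) (i : Fin m) :
    rankv (fun j => v (π j)) i = rankv v (π i) := by
  unfold rankv
  apply Finset.card_equiv π
  intro j
  simp

lemma rankv_pos {m : ℕ} (v : Fin m → ℝ) (i : Fin m) : 1 ≤ rankv v i := by
  unfold rankv
  have hi : i ∈ Finset.filter (fun j => v j ≤ v i) Finset.univ := by simp
  exact Finset.card_pos.mpr ⟨i, hi⟩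

lemma rankv_le {m : ℕ} (v : Fin m → ℝ) (i : Fin m) : rankv v i ≤ m := by
  unfold rankv
  calc (Finset.filter (fun j => v j ≤ v i) Finset.univ).card
      ≤ Finset.univ.card := Finset.card_filter_le _ _
    _ = m := by simp

lemma rankv_injective {m : ℕ} {v : Fin m → ℝ} (hv : Function.Injective v) :
    Function.Injective (rankv v) := by
  have key : ∀ i j : Fin m, v i < v j → rankv v i < rankv v j := by
    intro i j hij
    apply Finset.card_lt_card
    constructor
    · intro a ha
      simp only [Finset.mem_filter, Finset.mem_univ, true_and] at ha ⊢
      exact ha.trans hij.le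
    · intro hsub
      have := hsub (by simp : j ∈ Finset.univ.filter (fun a => v a ≤ v j))
      simp only [Finset.mem_filter, Finset.mem_univ, true_and] at this
      exact absurd this (not_le.mpr hij)
  intro i j h
  by_contra hne
  rcases lt_trichotomy (v i) (v j) with h1 | h1 | h1
  · exact absurd h (key i j h1).ne
  · exact hne (hv h1)
  · exact absurd h.symm (key j i h1).ne

lemma card_rankv_le {m : ℕ} {v : Fin m → ℝ} (hv : Function.Injective v) (k : ℕ) :
    (Finset.univ.filter (fun i : Fin m => rankv v i ≤ k)).card = min m k := by
  have hinj := rankv_injective hv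
  have himg : Finset.univ.image (rankv v) = Finset.Icc 1 m := by
    apply Finset.eq_of_subset_of_card_le
    · intro x hx
      simp only [Finset.mem_image] at hx
      obtain ⟨i, _, rfl⟩ := hx
      exact Finset.mem_Icc.mpr ⟨rankv_pos v i, rankv_le v i⟩
    · rw [Finset.card_image_of_injective _ hinj]
      simp [Nat.card_Icc]
  calc (Finset.univ.filter (fun i : Fin m => rankv v i ≤ k)).card
      = ((Finset.univ.filter (fun i : Fin m => rankv v i ≤ k)).image (rankv v)).card :=
        (Finset.card_image_of_injective _ hinj).symm
    _ = ((Finset.univ.image (rankv v)).filter (· ≤ k)).card := by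
        rw [Finset.filter_image]
    _ = ((Finset.Icc 1 m).filter (· ≤ k)).card := by rw [himg]
    _ = min m k := by
        have : (Finset.Icc 1 m).filter (· ≤ k) = Finset.Icc 1 (min m k) := by
          ext x; simp only [Finset.mem_filter, Finset.mem_Icc]; omega
        rw [this]; rw [Nat.card_Icc]; omega

lemma measurable_rankv {m : ℕ} (i : Fin m) :
    Measurable (fun v : Fin m → ℝ => rankv v i) := by
  have : (fun v : Fin m → ℝ => rankv v i)
      = fun v => ∑ j : Fin m, if v j ≤ v i then 1 else 0 := by
    funext v; unfold rankv; rw [Finset.card_filter]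
  rw [this]
  exact Finset.measurable_sum _ fun j _ =>
    Measurable.ite (measurableSet_le (measurable_pi_apply j) (measurable_pi_apply i))
      measurable_const measurable_const

lemma countP_lt_le_of_sorted (l : List ℝ) (hl : l.Pairwise (· ≤ ·)) (j : ℕ) (hj : j < l.length) :
    l.countP (fun x => decide (x < l[j])) ≤ j := by
  set p := fun x : ℝ => decide (x < l[j]) with hp
  have hsplit : l.countP p = (l.take j).countP p + (l.drop j).countP p := by
    rw [← List.countP_append, List.take_append_drop]
  have h1 : (l.take j).countP p ≤ j := by
    calc (l.take j).countP p ≤ (l.take j).length := List.countP_le_length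
      _ ≤ j := List.length_take_le j l
  have h2 : (l.drop j).countP p = 0 := by
    rw [List.countP_eq_zero]
    intro x hx
    obtain ⟨i, hi, rfl⟩ := List.mem_iff_getElem.mp hx
    have hji : j + i < l.length := by
      have := hi; rw [List.length_drop] at this; omega
    have hle : l[j] ≤ l[j + i] := by
      exact hl.rel_get_of_le (a := ⟨j, hj⟩) (b := ⟨j + i, hji⟩) (by simp)
    simp [hp]
    exact hle
  omega

lemma card_lt_orderStat_le {n : ℕ} (w : Fin n → ℝ) (k : ℕ) (hk1 : 1 ≤ k) (hkn : k ≤ n) :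
    (Finset.univ.filter (fun i => w i < orderStat w k)).card ≤ k - 1 := by
  set l := ((Finset.univ.val.map w).sort (· ≤ ·)) with hldef
  have hlen : l.length = n := by
    rw [hldef, Multiset.length_sort, Multiset.card_map]
    simp
  have hj : k - 1 < l.length := by omega
  have hQ : orderStat w k = l[k-1] := by
    rw [orderStat, List.getD_eq_getElem _ _ hj]
  have hsorted : l.Pairwise (· ≤ ·) := Multiset.pairwise_sort _ _
  have hcount : (Finset.univ.filter (fun i => w i < orderStat w k)).card
      = l.countP (fun x => decide (x < orderStat w k)) := by
    calc (Finset.univ.filter (fun i => w i < orderStat w k)).card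
        = Multiset.card (Multiset.filter (fun i => w i < orderStat w k) Finset.univ.val) := rfl
      _ = Multiset.countP (fun x => x < orderStat w k) (Finset.univ.val.map w) :=
          (Multiset.countP_map w Finset.univ.val (fun x => x < orderStat w k)).symm
      _ = Multiset.countP (fun x => x < orderStat w k) ↑l := by
          rw [hldef, Multiset.sort_eq]
      _ = l.countP (fun x => decide (x < orderStat w k)) := Multiset.coe_countP (p := fun x => x < orderStat w k) l
  rw [hcount, hQ]
  exact countP_lt_le_of_sorted l hsorted (k-1) hj

lemma rank_last_le {n : ℕ} (k : ℕ) (hk1 : 1 ≤ k) (hkn : k ≤ n)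
    (v : Fin (n+1) → ℝ) (hv : Function.Injective v)
    (h : v (Fin.last n) ≤ orderStat (fun i : Fin n => v i.castSucc) k) :
    rankv v (Fin.last n) ≤ k := by
  set w : Fin n → ℝ := fun i => v i.castSucc with hw
  set Q := orderStat w k with hQ
  have hsub : (Finset.univ.filter (fun j => v j ≤ v (Fin.last n)))
      ⊆ insert (Fin.last n)
        ((Finset.univ.filter (fun i : Fin n => w i < Q)).image Fin.castSucc) := by
    intro j hj
    simp only [Finset.mem_filter, Finset.mem_univ, true_and] at hj
    by_cases hjl : j = Fin.last n
    · subst hjl; exact Finset.mem_insert_self _ _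
    · obtain ⟨i, rfl⟩ := Fin.exists_castSucc_eq.mpr hjl
      apply Finset.mem_insert_of_mem
      apply Finset.mem_image_of_mem
      simp only [Finset.mem_filter, Finset.mem_univ, true_and]
      have hne : v i.castSucc ≠ v (Fin.last n) := fun hEq => hjl (hv hEq)
      exact lt_of_lt_of_le (lt_of_le_of_ne hj hne) h
  have hcard := card_lt_orderStat_le w k hk1 hkn
  rw [← hQ] at hcard
  calc rankv v (Fin.last n)
      ≤ (insert (Fin.last n)
          ((Finset.univ.filter (fun i : Fin n => w i < Q)).image Fin.castSucc)).card :=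
        Finset.card_le_card hsub
    _ ≤ ((Finset.univ.filter (fun i : Fin n => w i < Q)).image Fin.castSucc).card + 1 :=
        Finset.card_insert_le _ _
    _ ≤ (Finset.univ.filter (fun i : Fin n => w i < Q)).card + 1 := by
        have := Finset.card_image_le
          (s := Finset.univ.filter (fun i : Fin n => w i < Q)) (f := Fin.castSucc)
        omega
    _ ≤ k := by omega

/-- Exchangeability: the joint law is invariant under permutations of the indices. -/
def Exchangeable {Ω : Type*} [MeasurableSpace Ω] (P : Measure Ω)
    {n : ℕ} {β : Type*} [MeasurableSpace β] (Z : Fin n → Ω → β) : Prop :=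
  ∀ π : Equiv.Perm (Fin n),
    Measure.map (fun ω => fun i => Z (π i) ω) P = Measure.map (fun ω => fun i => Z i ω) P

/-- Split conformal coverage upper bound: for exchangeable, a.s. distinct scores,
with `Q` the `⌈(1-α)(n+1)⌉`-th smallest among the first `n` scores (assuming the
index is at most `n`), `P(Z_{n+1} ≤ Q) ≤ 1 - α + 1/(n+1)`. -/
theorem conformal_coverage_upper_bound
    {Ω : Type*} [MeasurableSpace Ω] (P : Measure Ω) [IsProbabilityMeasure P]
    (n : ℕ) (hn : 0 < n) (α : ℝ) (hα0 : 0 < α) (hα1 : α < 1)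
    (hk : ⌈(1 - α) * (n + 1)⌉₊ ≤ n)
    (Z : Fin (n + 1) → Ω → ℝ) (hmeas : ∀ i, Measurable (Z i))
    (hexch : Exchangeable P Z)
    (hdist : ∀ᵐ ω ∂P, Function.Injective (fun i => Z i ω)) :
    P {ω | Z (Fin.last n) ω ≤
        orderStat (fun i : Fin n => Z i.castSucc ω) ⌈(1 - α) * (n + 1)⌉₊}
      ≤ ENNReal.ofReal (1 - α + 1 / (n + 1)) := by
  set k := ⌈(1 - α) * (n + 1)⌉₊ with hkdef
  have hpos : (0:ℝ) < (1 - α) * (n + 1) := by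
    apply mul_pos (by linarith)
    positivity
  have hk1 : 1 ≤ k := Nat.one_le_iff_ne_zero.mpr (Nat.ceil_pos.mpr hpos).ne'
  set Zvec : Ω → (Fin (n+1) → ℝ) := fun ω i => Z i ω with hZvecdef
  have hZvec : Measurable Zvec := measurable_pi_lambda _ hmeas
  set A : Fin (n+1) → Set Ω := fun i => {ω | rankv (Zvec ω) i ≤ k} with hAdef
  have hS : ∀ i : Fin (n+1), MeasurableSet {v : Fin (n+1) → ℝ | rankv v i ≤ k} :=
    fun i => (measurable_rankv i) measurableSet_Iic
  have hA : ∀ i, MeasurableSet (A i) := fun i => hZvec (hS i)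
  -- Step A: exchangeability gives equal probabilities
  have keyA : ∀ i, P (A i) = P (A (Fin.last n)) := by
    intro i
    have hπ := hexch (Equiv.swap i (Fin.last n))
    have hmeasπ : Measurable (fun ω => fun j => Z ((Equiv.swap i (Fin.last n)) j) ω) :=
      measurable_pi_lambda _ fun j => hmeas _
    have h1 : A i = (fun ω => fun j => Z ((Equiv.swap i (Fin.last n)) j) ω) ⁻¹'
        {v | rankv v (Fin.last n) ≤ k} := by
      ext ω
      simp only [Set.mem_preimage, Set.mem_setOf_eq, hAdef]
      rw [show (fun j => Z ((Equiv.swap i (Fin.last n)) j) ω)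
          = (fun j => Zvec ω ((Equiv.swap i (Fin.last n)) j)) from rfl, rankv_perm]
      rw [Equiv.swap_apply_right]
    rw [h1, ← Measure.map_apply hmeasπ (hS _), hπ, Measure.map_apply hZvec (hS _)]
    rfl
  -- Step B: the probabilities sum to k
  have keyB : ∑ i : Fin (n+1), P (A i) = (k : ℝ≥0∞) := by
    have h1 : ∀ i : Fin (n+1), P (A i) = ∫⁻ ω, (A i).indicator (fun _ => (1:ℝ≥0∞)) ω ∂P :=
      fun i => (lintegral_indicator_one (hA i)).symm
    calc ∑ i : Fin (n+1), P (A i)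
        = ∑ i : Fin (n+1), ∫⁻ ω, (A i).indicator (fun _ => (1:ℝ≥0∞)) ω ∂P :=
          Finset.sum_congr rfl fun i _ => h1 i
      _ = ∫⁻ ω, ∑ i : Fin (n+1), (A i).indicator (fun _ => (1:ℝ≥0∞)) ω ∂P :=
          (lintegral_finset_sum _ fun i _ => (measurable_one.indicator (hA i))).symm
      _ = ∫⁻ _, (k : ℝ≥0∞) ∂P := by
          apply lintegral_congr_ae
          filter_upwards [hdist] with ω hω
          have hcards := card_rankv_le (v := Zvec ω) hω k
          have hmin : min (n+1) k = k := by omega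
          rw [hmin] at hcards
          have hsum : ∑ i : Fin (n+1), (A i).indicator (fun _ => (1:ℝ≥0∞)) ω
              = ((Finset.univ.filter (fun i : Fin (n+1) => rankv (Zvec ω) i ≤ k)).card : ℝ≥0∞) := by
            rw [Finset.card_filter]
            push_cast
            apply Finset.sum_congr rfl
            intro i _
            by_cases h : rankv (Zvec ω) i ≤ k
            · simp [hAdef, Set.indicator, h]
            · simp [hAdef, Set.indicator, h]
          rw [hsum, hcards]
      _ = (k : ℝ≥0∞) := by rw [lintegral_const, measure_univ, mul_one]
  -- conclude P (A last) = k / (n+1)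
  have hlast : P (A (Fin.last n)) = (k : ℝ≥0∞) / ((n:ℝ≥0∞) + 1) := by
    have hmul : ((n:ℝ≥0∞) + 1) * P (A (Fin.last n)) = (k : ℝ≥0∞) := by
      rw [← keyB, Finset.sum_congr rfl (fun i _ => keyA i), Finset.sum_const,
        Finset.card_univ, Fintype.card_fin, nsmul_eq_mul]
      push_cast
      ring
    rw [ENNReal.eq_div_iff (by simp) (by simp)]
    exact hmul
  -- Step C: the event is a.e. contained in A (last)
  have hmono : P {ω | Z (Fin.last n) ω ≤
        orderStat (fun i : Fin n => Z i.castSucc ω) k} ≤ P (A (Fin.last n)) := by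
    apply measure_mono_ae
    filter_upwards [hdist] with ω hω hmem
    exact rank_last_le k hk1 hk (Zvec ω) hω hmem
  -- final arithmetic
  refine hmono.trans (hlast.le.trans ?_)
  have hofr : (k : ℝ≥0∞) / ((n:ℝ≥0∞) + 1) = ENNReal.ofReal ((k:ℝ) / (n + 1)) := by
    rw [ENNReal.ofReal_div_of_pos (by positivity)]
    congr 1
    · exact (ENNReal.ofReal_natCast k).symm
    · rw [show ((n:ℝ) + 1) = ((n + 1 : ℕ) : ℝ) by push_cast; ring, ENNReal.ofReal_natCast]
      push_cast
      ring
  rw [hofr]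
  apply ENNReal.ofReal_le_ofReal
  have hceil : (k:ℝ) ≤ (1 - α) * (n + 1) + 1 := by
    have := Nat.ceil_lt_add_one hpos.le
    rw [← hkdef] at this
    linarith
  rw [div_le_iff₀ (by positivity : (0:ℝ) < (n:ℝ) + 1)]
  have hexp : (1 - α + 1 / ((n:ℝ) + 1)) * ((n:ℝ) + 1) = (1 - α) * (n + 1) + 1 := by
    field_simp
  linarith
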